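/- Let k ≥ 2. The set of k-free positive integers up to x has cardinality x/ζ(k) + O(x^{1/k}), where ζ is the Riemann zeta function. -/

import Mathlib

open Finset ArithmeticFunction
open scoped LSeries.notation
open scoped ArithmeticFunction.Moebius

/-- A positive integer `n` is `k`-free if `p^k ∤ n` for every prime `p`. -/
def KFreeNat (k n : ℕ) : Prop := ∀ p : ℕ, p.Prime → ¬ (p^k ∣ n)

namespace KF

/-- the `k`-kernel of `n`: product of `p ^ (v_p(n)/k)`. -/
noncomputable def kern (k n : ℕ) : ℕ := (n.factorization.mapRange (· / k) (Nat.zero_div k)).prod (· ^ ·)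

lemma kern_factorization {k n : ℕ} (hn : n ≠ 0) :
    (kern k n).factorization = n.factorization.mapRange (· / k) (Nat.zero_div k) := by
  apply Nat.prod_pow_factorization_eq_self
  intro p hp
  have := Finsupp.support_mapRange (f := fun e => e / k) (hf := Nat.zero_div k)
    (g := n.factorization) hp
  exact Nat.prime_of_mem_primeFactors (by simpa using this)

lemma kern_ne_zero {k n : ℕ} (hn : n ≠ 0) : kern k n ≠ 0 := by
  unfold kern
  apply Finsupp.prod_ne_zero_iff.mpr
  intro p hp
  have : p.Prime := by
    have := Finsupp.support_mapRange (f := fun e => e / k) (hf := Nat.zero_div k)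
      (g := n.factorization) hp
    exact Nat.prime_of_mem_primeFactors (by simpa using this)
  exact pow_ne_zero _ this.pos.ne'

lemma kern_dvd {k n : ℕ} (hn : n ≠ 0) : kern k n ∣ n := by
  rw [← Nat.factorization_le_iff_dvd (kern_ne_zero hn) hn, kern_factorization hn]
  intro p
  simp only [Finsupp.mapRange_apply]
  exact Nat.div_le_self _ _

lemma dvd_kern_iff {k n : ℕ} (hk : 1 ≤ k) (hn : n ≠ 0) (d : ℕ) :
    d ∣ kern k n ↔ d ^ k ∣ n := by
  rcases eq_or_ne d 0 with rfl | hd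
  · simp [zero_pow (by omega : k ≠ 0), (kern_ne_zero hn).symm,
      zero_dvd_iff, hn, (kern_ne_zero (k := k) hn)]
  · have hdk : d ^ k ≠ 0 := pow_ne_zero _ hd
    rw [← Nat.factorization_le_iff_dvd hd (kern_ne_zero hn),
      ← Nat.factorization_le_iff_dvd hdk hn, kern_factorization hn]
    constructor
    · intro h p
      have := h p
      simp only [Finsupp.mapRange_apply] at this
      rw [Nat.factorization_pow]
      simp only [Finsupp.smul_apply, smul_eq_mul]
      have h2 := (Nat.le_div_iff_mul_le (by omega : 0 < k)).mp this
      rw [mul_comm]; exact h2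
    · intro h p
      have := h p
      rw [Nat.factorization_pow] at this
      simp only [Finsupp.smul_apply, smul_eq_mul] at this
      simp only [Finsupp.mapRange_apply]
      exact (Nat.le_div_iff_mul_le (by omega : 0 < k)).mpr (by rw [mul_comm]; exact this)

lemma kern_eq_one_iff {k n : ℕ} (hk : 1 ≤ k) (hn : n ≠ 0) :
    kern k n = 1 ↔ KFreeNat k n := by
  rw [Nat.eq_one_iff_not_exists_prime_dvd]
  constructor
  · intro h p hp hdvd
    exact h p hp ((dvd_kern_iff hk hn p).mpr hdvd)
  · intro h p hp hdvd
    exact h p hp ((dvd_kern_iff hk hn p).mp hdvd)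

lemma sum_moebius_divisors (m : ℕ) :
    ∑ d ∈ m.divisors, μ d = if m = 1 then 1 else 0 := by
  have h := congrArg (fun f : ArithmeticFunction ℤ => f m) moebius_mul_coe_zeta
  simp only [coe_mul_zeta_apply, one_apply] at h
  exact h

lemma divisors_kern_eq {k n x : ℕ} (hk : 1 ≤ k) (hn : n ∈ Finset.Icc 1 x) :
    (kern k n).divisors = (Finset.Icc 1 x).filter (fun d => d ^ k ∣ n) := by
  simp only [Finset.mem_Icc] at hn
  have hn0 : n ≠ 0 := by omega
  ext d
  simp only [Nat.mem_divisors, Finset.mem_filter, Finset.mem_Icc]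
  constructor
  · rintro ⟨hd, -⟩
    refine ⟨⟨?_, ?_⟩, (dvd_kern_iff hk hn0 d).mp hd⟩
    · exact Nat.pos_of_dvd_of_pos hd (Nat.pos_of_ne_zero (kern_ne_zero hn0))
    · exact le_trans (Nat.le_of_dvd (Nat.pos_of_ne_zero (kern_ne_zero hn0)) hd)
        (le_trans (Nat.le_of_dvd (by omega) (kern_dvd hn0)) hn.2)
  · rintro ⟨-, hd⟩
    exact ⟨(dvd_kern_iff hk hn0 d).mpr hd, kern_ne_zero hn0⟩

open scoped Classical in
lemma count_eq {k : ℕ} (hk : 1 ≤ k) (x : ℕ) :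
    (((Finset.Icc 1 x).filter (fun n => KFreeNat k n)).card : ℤ)
      = ∑ d ∈ Finset.Icc 1 x, μ d * (x / d ^ k : ℕ) := by
  have step1 : (((Finset.Icc 1 x).filter (fun n => KFreeNat k n)).card : ℤ)
      = ∑ n ∈ Finset.Icc 1 x, if KFreeNat k n then (1 : ℤ) else 0 := by
    rw [Finset.card_filter]
    push_cast [apply_ite (Nat.cast : ℕ → ℤ)]
    rfl
  rw [step1]
  have step2 : ∀ n ∈ Finset.Icc 1 x, (if KFreeNat k n then (1 : ℤ) else 0)
      = ∑ d ∈ Finset.Icc 1 x, if d ^ k ∣ n then μ d else 0 := by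
    intro n hn
    have hn0 : n ≠ 0 := by simp only [Finset.mem_Icc] at hn; omega
    rw [← Finset.sum_filter, ← divisors_kern_eq hk hn, sum_moebius_divisors]
    by_cases h : KFreeNat k n
    · rw [if_pos h, if_pos ((kern_eq_one_iff hk hn0).mpr h)]
    · rw [if_neg h, if_neg (fun h1 => h ((kern_eq_one_iff hk hn0).mp h1))]
  rw [Finset.sum_congr rfl step2, Finset.sum_comm]
  refine Finset.sum_congr rfl fun d _ => ?_
  have hIcc : Finset.Icc 1 x = Finset.Ioc 0 x := by ext a; simp [Nat.lt_iff_add_one_le]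
  rw [← Finset.sum_filter, Finset.sum_const, hIcc, Nat.Ioc_filter_dvd_card_eq_div]
  simp [mul_comm]

section analytic

noncomputable def F (k d : ℕ) : ℝ := 1 / (d : ℝ) ^ k

noncomputable def f (k d : ℕ) : ℝ := ((μ d : ℤ) : ℝ) / (d : ℝ) ^ k

lemma summable_F {k : ℕ} (hk : 2 ≤ k) : Summable (F k) := by
  unfold F
  exact Real.summable_one_div_nat_pow.mpr (by omega : 1 < k)

lemma F_nonneg (k d : ℕ) : 0 ≤ F k d := by unfold F; positivity

lemma abs_f_le (k d : ℕ) : |f k d| ≤ F k d := by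
  unfold f F
  rw [abs_div, abs_of_nonneg (by positivity : (0:ℝ) ≤ (d:ℝ)^k)]
  have h1 : |((μ d : ℤ) : ℝ)| ≤ 1 := by
    have h2 := abs_moebius_le_one (n := d)
    calc |((μ d : ℤ) : ℝ)| = ((|μ d| : ℤ) : ℝ) := by push_cast; ring
      _ ≤ 1 := by exact_mod_cast h2
  rcases Nat.eq_zero_or_pos d with rfl | hd
  · simp only [ArithmeticFunction.map_zero, Int.cast_zero, zero_div, abs_zero]
    positivity
  · gcongr

lemma summable_f {k : ℕ} (hk : 2 ≤ k) : Summable (f k) :=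
  Summable.of_norm_bounded (summable_F hk) (fun d => by
    rw [Real.norm_eq_abs]; exact abs_f_le k d)

lemma real_ineq {m : ℕ} (hm : 1 ≤ m) {b : ℝ} (hb : 1 ≤ b) :
    1 / (b+1) ^ (m+1) ≤ 1 / b ^ m - 1 / (b+1) ^ m := by
  obtain ⟨j, rfl⟩ : ∃ j, m = j + 1 := ⟨m - 1, by omega⟩
  have hb0 : (0:ℝ) < b := by linarith
  have ha : (0:ℝ) < b + 1 := by linarith
  have hpb : (0:ℝ) < b ^ (j+1) := pow_pos hb0 _
  have hpa : (0:ℝ) < (b+1) ^ (j+1) := pow_pos ha _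
  have hpbj : (0:ℝ) < b ^ j := pow_pos hb0 _
  have key : b ^ (j+1) + b ^ j ≤ (b+1) ^ (j+1) := by
    have h1 : b ^ j ≤ (b+1) ^ j := pow_le_pow_left₀ hb0.le (by linarith) j
    calc b ^ (j+1) + b ^ j = b ^ j * (b + 1) := by ring
      _ ≤ (b+1) ^ j * (b+1) := by nlinarith
      _ = (b+1) ^ (j+1) := (pow_succ _ _).symm
  have h1 : 1 / (b+1) ^ (j+1+1) ≤ 1 / ((b+1) ^ (j+1) * b) := by
    apply one_div_le_one_div_of_le (by positivity)
    calc (b+1) ^ (j+1) * b ≤ (b+1) ^ (j+1) * (b+1) := by nlinarith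
      _ = (b+1) ^ (j+1+1) := (pow_succ _ _).symm
  refine h1.trans ?_
  rw [div_sub_div _ _ hpb.ne' hpa.ne', div_le_div_iff₀ (by positivity) (by positivity)]
  calc 1 * (b ^ (j+1) * (b+1) ^ (j+1))
      = b ^ j * ((b+1) ^ (j+1) * b) := by ring
    _ ≤ ((b+1) ^ (j+1) - b ^ (j+1)) * ((b+1) ^ (j+1) * b) :=
        mul_le_mul_of_nonneg_right (by linarith) (by positivity)
    _ = (1 * (b+1) ^ (j+1) - b ^ (j+1) * 1) * ((b+1) ^ (j+1) * b) := by ring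

lemma tail_bound {k : ℕ} (hk : 2 ≤ k) {D : ℕ} (hD : 1 ≤ D) :
    |∑' i : ℕ, f k (i + (D+1))| ≤ 1 / (D:ℝ) ^ (k-1) := by
  have hsum_f : Summable (fun i : ℕ => f k (i + (D+1))) :=
    (summable_nat_add_iff (D+1)).mpr (summable_f hk)
  have hsum_F : Summable (fun i : ℕ => F k (i + (D+1))) :=
    (summable_nat_add_iff (D+1)).mpr (summable_F hk)
  have habs : Summable (fun i : ℕ => |f k (i + (D+1))|) :=
    Summable.of_nonneg_of_le (fun i => abs_nonneg _) (fun i => abs_f_le _ _) hsum_F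
  have step1 : |∑' i : ℕ, f k (i + (D+1))| ≤ ∑' i : ℕ, |f k (i + (D+1))| := by
    simpa [Real.norm_eq_abs] using
      norm_tsum_le_tsum_norm (f := fun i : ℕ => f k (i + (D+1))) (by simpa [Real.norm_eq_abs] using habs)
  have step2 : ∑' i : ℕ, |f k (i + (D+1))| ≤ ∑' i : ℕ, F k (i + (D+1)) :=
    Summable.tsum_le_tsum (fun i => abs_f_le _ _) habs hsum_F
  refine step1.trans (step2.trans ?_)
  set h : ℕ → ℝ := fun i => 1 / ((D:ℝ) + i) ^ (k-1) with hh
  have key : ∀ i : ℕ, F k (i + (D+1)) ≤ h i - h (i+1) := by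
    intro i
    have hb : (1:ℝ) ≤ (D:ℝ) + i := by
      have : (1:ℝ) ≤ (D:ℝ) := by exact_mod_cast hD
      have : (0:ℝ) ≤ (i:ℝ) := Nat.cast_nonneg i
      linarith
    have := real_ineq (m := k-1) (by omega) hb
    rw [(by omega : k - 1 + 1 = k)] at this
    have e1 : F k (i + (D+1)) = 1 / ((D:ℝ) + i + 1) ^ k := by
      unfold F; push_cast; ring_nf
    have e2 : h (i+1) = 1 / ((D:ℝ) + i + 1) ^ (k-1) := by
      rw [hh]; push_cast; ring_nf
    rw [e1, e2, hh]
    simpa using this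
  apply Summable.tsum_le_of_sum_le hsum_F
  intro s
  obtain ⟨N, hN⟩ := s.exists_nat_subset_range
  calc ∑ i ∈ s, F k (i + (D+1)) ≤ ∑ i ∈ Finset.range N, F k (i + (D+1)) :=
        Finset.sum_le_sum_of_subset_of_nonneg hN (fun i _ _ => F_nonneg k _)
    _ ≤ ∑ i ∈ Finset.range N, (h i - h (i+1)) := Finset.sum_le_sum (fun i _ => key i)
    _ = h 0 - h N := Finset.sum_range_sub' h N
    _ ≤ h 0 := by
        have : 0 ≤ h N := by rw [hh]; positivity
        linarith
    _ = 1 / (D:ℝ) ^ (k-1) := by rw [hh]; norm_num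

lemma S_summable {k : ℕ} (hk : 2 ≤ k) : Summable (fun m : ℕ => 1 / ((m:ℝ) + 1) ^ k) := by
  have : (fun m : ℕ => 1 / ((m:ℝ) + 1) ^ k) = fun m : ℕ => F k (m + 1) := by
    funext m; unfold F; push_cast; ring
  rw [this]
  exact (summable_nat_add_iff 1).mpr (summable_F hk)

lemma S_pos {k : ℕ} (hk : 2 ≤ k) : 0 < ∑' m : ℕ, 1 / ((m:ℝ) + 1) ^ k := by
  have h0 : (1:ℝ) ≤ ∑' m : ℕ, 1 / ((m:ℝ) + 1) ^ k := by
    have := Summable.le_tsum (S_summable hk) 0 (fun i _ => by positivity)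
    simpa using this
  linarith

lemma S_mul_T {k : ℕ} (hk : 2 ≤ k) :
    (∑' m : ℕ, 1 / ((m:ℝ) + 1) ^ k) * (∑' d : ℕ, f k d) = 1 := by
  set s : ℂ := (k : ℂ) with hs_def
  have hs : 1 < s.re := by
    rw [hs_def, Complex.natCast_re]
    exact_mod_cast (by omega : 1 < k)
  have h1 : ((∑' m : ℕ, 1 / ((m:ℝ) + 1) ^ k : ℝ) : ℂ) = LSeries 1 s := by
    rw [Complex.ofReal_tsum, LSeries,
      Summable.tsum_eq_zero_add (LSeriesSummable_one_iff.mpr hs)]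
    rw [LSeries.term_zero, zero_add]
    apply tsum_congr
    intro m
    rw [LSeries.term_of_ne_zero (Nat.succ_ne_zero m), hs_def, Complex.cpow_natCast, Pi.one_apply]
    push_cast
    ring
  have h2 : ((∑' d : ℕ, f k d : ℝ) : ℂ) = LSeries ↗μ s := by
    rw [Complex.ofReal_tsum]
    apply tsum_congr
    intro d
    rcases Nat.eq_zero_or_pos d with rfl | hd
    · rw [LSeries.term_zero]
      simp [f]
    · rw [LSeries.term_of_ne_zero (by omega : d ≠ 0), hs_def, Complex.cpow_natCast]
      unfold f
      push_cast
      ring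
  have h3 := LSeries_one_mul_Lseries_moebius hs
  have h4 : (((∑' m : ℕ, 1 / ((m:ℝ) + 1) ^ k) * (∑' d : ℕ, f k d) : ℝ) : ℂ) = 1 := by
    rw [Complex.ofReal_mul, h1, h2]
    exact h3
  exact_mod_cast h4

end analytic

end KF

/-- For `k ≥ 2`, the number of `k`-free integers in `[1, x]` is
`x / ζ(k) + O(x^{1/k})`, where `ζ(k) = ∑_{m ≥ 1} m⁻ᵏ`. -/
theorem kfree_count_asymptotic (k : ℕ) (hk : 2 ≤ k) :
    ∃ C : ℝ, ∀ x : ℕ, 1 ≤ x →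
      |(Nat.card {n : ℕ // n ∈ Finset.Icc 1 x ∧ KFreeNat k n} : ℝ) -
        (x : ℝ) / (∑' m : ℕ, (1 : ℝ) / (m + 1)^k)| ≤ C * (x : ℝ)^((1 : ℝ) / k) := by
  classical
  refine ⟨2 ^ k + 1, fun x hx => ?_⟩
  have hk1 : 1 ≤ k := by omega
  set S : ℝ := ∑' m : ℕ, (1 : ℝ) / ((m : ℝ) + 1) ^ k with hS_def
  set T : ℝ := ∑' d : ℕ, KF.f k d with hT_def
  have hS : 0 < S := KF.S_pos hk
  have hST : S * T = 1 := KF.S_mul_T hk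
  have hxT : (x : ℝ) / S = (x : ℝ) * T := by
    rw [div_eq_iff hS.ne', mul_assoc, mul_comm T S, hST, mul_one]
  -- Step A : Nat.card = Finset card
  have hcardA : (Nat.card {n : ℕ // n ∈ Finset.Icc 1 x ∧ KFreeNat k n} : ℝ)
      = (((Finset.Icc 1 x).filter (fun n => KFreeNat k n)).card : ℝ) := by
    congr 1
    have e : {n : ℕ // n ∈ Finset.Icc 1 x ∧ KFreeNat k n}
        ≃ {n : ℕ // n ∈ (Finset.Icc 1 x).filter fun n => KFreeNat k n} :=
      Equiv.subtypeEquivRight (fun n => by simp [Finset.mem_filter])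
    rw [Nat.card_congr e, Nat.card_eq_finsetCard]
  -- Step B : the parameter D
  set y : ℝ := (x : ℝ) ^ ((1 : ℝ) / k) with hy_def
  set D : ℕ := ⌊y⌋₊ with hD_def
  have hx1 : (1 : ℝ) ≤ (x : ℝ) := by exact_mod_cast hx
  have hy1 : 1 ≤ y := Real.one_le_rpow hx1 (by positivity)
  have hy0 : 0 ≤ y := by linarith
  have hD1 : 1 ≤ D := Nat.le_floor (by exact_mod_cast hy1)
  have hyk : y ^ k = (x : ℝ) := by
    rw [hy_def, one_div]
    exact Real.rpow_inv_natCast_pow (by positivity) (by omega)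
  have hdle : ∀ d : ℕ, (d ^ k ≤ x ↔ d ≤ D) := by
    intro d
    rw [hD_def, Nat.le_floor_iff hy0, hy_def, one_div,
      Real.le_rpow_inv_iff_of_pos (Nat.cast_nonneg d) (by positivity)
        (by exact_mod_cast Nat.pos_of_ne_zero (by omega)),
      Real.rpow_natCast]
    exact_mod_cast Iff.rfl
  have hDx : D ≤ x := le_trans (Nat.le_self_pow (by omega) D) ((hdle D).mpr le_rfl)
  -- Step C : reduce the sum to Icc 1 D
  have hcount := KF.count_eq hk1 x
  have hrestrict : ∑ d ∈ Finset.Icc 1 x, (μ d) * ((x / d ^ k : ℕ) : ℤ)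
      = ∑ d ∈ Finset.Icc 1 D, (μ d) * ((x / d ^ k : ℕ) : ℤ) := by
    refine (Finset.sum_subset (Finset.Icc_subset_Icc le_rfl hDx) ?_).symm
    intro d hd hnd
    simp only [Finset.mem_Icc] at hd hnd
    have hDd : ¬ d ^ k ≤ x := by
      rw [hdle d]; omega
    rw [Nat.div_eq_of_lt (by omega), Nat.cast_zero, mul_zero]
  -- Step D : real version
  have hcardR : (((Finset.Icc 1 x).filter (fun n => KFreeNat k n)).card : ℝ)
      = ∑ d ∈ Finset.Icc 1 D, ((μ d : ℤ) : ℝ) * ((x / d ^ k : ℕ) : ℝ) := by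
    have h := congrArg (fun z : ℤ => (z : ℝ)) (hcount.trans hrestrict)
    simp only [Int.cast_natCast, Int.cast_sum, Int.cast_mul] at h
    exact h
  -- Step E : estimates
  set A : ℝ := ∑ d ∈ Finset.Icc 1 D, ((μ d : ℤ) : ℝ) * ((x / d ^ k : ℕ) : ℝ) with hA_def
  set B : ℝ := ∑ d ∈ Finset.Icc 1 D, ((μ d : ℤ) : ℝ) * ((x : ℝ) / (d : ℝ) ^ k) with hB_def
  have habs_mu : ∀ d : ℕ, |((μ d : ℤ) : ℝ)| ≤ 1 := by
    intro d
    calc |((μ d : ℤ) : ℝ)| = ((|μ d| : ℤ) : ℝ) := by push_cast; ring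
      _ ≤ 1 := by exact_mod_cast abs_moebius_le_one
  have hAB : |A - B| ≤ (D : ℝ) := by
    rw [hA_def, hB_def, ← Finset.sum_sub_distrib]
    calc |∑ d ∈ Finset.Icc 1 D, (((μ d : ℤ) : ℝ) * ((x / d ^ k : ℕ) : ℝ)
            - ((μ d : ℤ) : ℝ) * ((x : ℝ) / (d : ℝ) ^ k))|
        ≤ ∑ d ∈ Finset.Icc 1 D, |((μ d : ℤ) : ℝ) * ((x / d ^ k : ℕ) : ℝ)
            - ((μ d : ℤ) : ℝ) * ((x : ℝ) / (d : ℝ) ^ k)| :=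
          Finset.abs_sum_le_sum_abs _ _
      _ ≤ ∑ _d ∈ Finset.Icc 1 D, (1 : ℝ) := by
          apply Finset.sum_le_sum
          intro d hd
          simp only [Finset.mem_Icc] at hd
          have hm : 0 < d ^ k := pow_pos (by omega) k
          have hdr : (0:ℝ) < (d:ℝ) ^ k := by exact_mod_cast hm
          have h1 : x / d ^ k * d ^ k ≤ x := Nat.div_mul_le_self x _
          have h2 : x < (x / d ^ k + 1) * d ^ k := by
            have e1 := Nat.div_add_mod x (d ^ k)
            have e2 := Nat.mod_lt x hm
            nlinarith [e1, e2]
          have h1r : ((x / d ^ k : ℕ) : ℝ) ≤ (x:ℝ) / (d:ℝ) ^ k := by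
            rw [le_div_iff₀ hdr]
            exact_mod_cast h1
          have h2r : (x:ℝ) / (d:ℝ) ^ k < ((x / d ^ k : ℕ) : ℝ) + 1 := by
            rw [div_lt_iff₀ hdr]
            exact_mod_cast h2
          rw [← mul_sub, abs_mul]
          calc |((μ d : ℤ):ℝ)| * |((x / d ^ k : ℕ) : ℝ) - (x:ℝ)/(d:ℝ)^k|
              ≤ 1 * 1 := mul_le_mul (habs_mu d)
                (abs_le.mpr ⟨by linarith, by linarith⟩) (abs_nonneg _) zero_le_one
            _ = 1 := mul_one 1
      _ = (D : ℝ) := by simp [Nat.card_Icc]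
  have hf0 : KF.f k 0 = 0 := by simp [KF.f]
  have hB2 : B = (x : ℝ) * ∑ i ∈ Finset.range (D+1), KF.f k i := by
    have hr : Finset.range (D+1) = insert 0 (Finset.Icc 1 D) := by
      ext a; simp; omega
    rw [hr, Finset.sum_insert (by simp), hf0, zero_add, Finset.mul_sum, hB_def]
    apply Finset.sum_congr rfl
    intro d hd
    unfold KF.f
    ring
  have htail := Summable.sum_add_tsum_nat_add (f := KF.f k) (D+1) (KF.summable_f hk)
  set R : ℝ := ∑' i : ℕ, KF.f k (i + (D+1)) with hR_def
  have hBT : B - (x : ℝ) * T = -(x : ℝ) * R := by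
    rw [hB2, hT_def, ← htail]; ring
  have hR : |R| ≤ 1 / (D : ℝ) ^ (k-1) := KF.tail_bound hk hD1
  have hDy : (D : ℝ) ≤ y := Nat.floor_le hy0
  have hy2D : y ≤ 2 * (D : ℝ) := by
    have h1 := Nat.lt_floor_add_one y
    have h2 : (1 : ℝ) ≤ (D : ℝ) := by exact_mod_cast hD1
    rw [← hD_def] at h1
    linarith
  have hDpos : (0 : ℝ) < (D : ℝ) ^ (k-1) := by
    have : (0:ℝ) < (D:ℝ) := by exact_mod_cast hD1
    positivity
  have hxR : (x : ℝ) * (1 / (D : ℝ) ^ (k-1)) ≤ 2 ^ (k-1) * y := by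
    rw [mul_one_div, div_le_iff₀ hDpos]
    have hkm : k - 1 + 1 = k := by omega
    calc (x : ℝ) = y ^ (k-1) * y := by rw [← pow_succ, hkm, hyk]
      _ ≤ (2 * (D:ℝ)) ^ (k-1) * y := by
          apply mul_le_mul_of_nonneg_right _ (by linarith)
          exact pow_le_pow_left₀ hy0 hy2D _
      _ = 2 ^ (k-1) * y * (D : ℝ) ^ (k-1) := by rw [mul_pow]; ring
  -- final computation
  rw [hcardA, hcardR, hxT]
  have key : A - (x:ℝ) * T = (A - B) + (B - (x:ℝ) * T) := by ring
  calc |A - (x:ℝ)*T| ≤ |A - B| + |B - (x:ℝ)*T| := by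
        rw [key]; exact abs_add_le _ _
    _ ≤ (D : ℝ) + (x:ℝ) * (1 / (D:ℝ)^(k-1)) := by
        apply add_le_add hAB
        rw [hBT, neg_mul, abs_neg, abs_mul, abs_of_nonneg (by positivity : (0:ℝ) ≤ (x:ℝ))]
        exact mul_le_mul_of_nonneg_left hR (by positivity)
    _ ≤ y + 2 ^ (k-1) * y := add_le_add hDy hxR
    _ ≤ (2 ^ k + 1) * y := by
        have h2 : (2:ℝ) ^ (k-1) ≤ 2 ^ k := pow_le_pow_right₀ (by norm_num) (by omega)
        nlinarith [hy1]
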